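/- In the chore (cost) setting, an allocation rule x admits a payment scheme p such that the mechanism (x,p) is truthful if and only if x satisfies the monotonicity property: x_i(a, s_{-i}) ≤ x_i(b, s_{-i}) for all agents i, all s_{-i} ∈ [k]^{n-1}, and all a,b ∈ [k] with c_i(a, s_{-i}) > c_i(b, s_{-i}). -/
import Mathlib

/-- Existence of a nonnegative potential satisfying the incentive inequalities,
for a monotone allocation (in a finite abstract setting). -/
lemma exists_potential {ι : Type*} [DecidableEq ι]
    (c x : ι → ℝ) (hx0 : ∀ a, 0 ≤ x a)
    (mono : ∀ a b, c b < c a → x a ≤ x b) :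
    ∀ S : Finset ι, ∃ u : ι → ℝ, (∀ a ∈ S, 0 ≤ u a) ∧
      ∀ a ∈ S, ∀ b ∈ S, x b * (c b - c a) ≤ u a - u b := by
  classical
  intro S
  induction S using Finset.strongInduction with
  | _ S ih =>
    rcases S.eq_empty_or_nonempty with rfl | hS
    · exact ⟨0, by simp, by simp⟩
    · set T := S.sup' hS c with hT
      obtain ⟨b₀, hb₀S, hb₀⟩ := Finset.exists_mem_eq_sup' hS c
      set S' := S.filter (fun b => ¬ (c b = T)) with hS'def
      have hsub : S' ⊂ S := by
        refine ⟨Finset.filter_subset _ _, fun h => ?_⟩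
        have := h hb₀S
        rw [hS'def, Finset.mem_filter] at this
        exact this.2 hb₀.symm
      obtain ⟨u', hu0', hIC'⟩ := ih S' hsub
      have hleT : ∀ a ∈ S, c a ≤ T := fun a ha => Finset.le_sup' c ha
      have hmemS' : ∀ a ∈ S, c a ≠ T → a ∈ S' := by
        intro a ha h; rw [hS'def, Finset.mem_filter]; exact ⟨ha, h⟩
      rcases S'.eq_empty_or_nonempty with hS'e | hS'ne
      · -- all costs equal T
        have hall : ∀ a ∈ S, c a = T := by
          intro a ha
          by_contra h
          have := hmemS' a ha h
          simp [hS'e] at this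
        refine ⟨0, by simp, ?_⟩
        intro a ha b hb
        rw [hall a ha, hall b hb]
        simp
      · set δ := S'.inf' hS'ne (fun b => x b * (T - c b) - u' b) with hδdef
        have key : ∀ a ∈ S', ∀ b' ∈ S', ∀ b ∈ S, c b = T →
            x b * (T - c a) - u' a ≤ x b' * (T - c b') - u' b' := by
          intro a ha b' hb' b hb hcb
          have haS : a ∈ S := Finset.filter_subset _ _ ha
          have hb'S : b' ∈ S := Finset.filter_subset _ _ hb'
          have hb'ne : c b' ≠ T := by
            have := (Finset.mem_filter.mp (hS'def ▸ hb')).2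
            simpa using this
          have hlt : c b' < c b := by
            rw [hcb]; exact lt_of_le_of_ne (hleT b' hb'S) hb'ne
          have hx : x b ≤ x b' := mono b b' hlt
          have h1 : x b * (T - c a) ≤ x b' * (T - c a) :=
            mul_le_mul_of_nonneg_right hx (sub_nonneg.mpr (hleT a haS))
          have h2 : x b' * (c b' - c a) ≤ u' a - u' b' := hIC' a ha b' hb'
          nlinarith [h1, h2]
        have hδge : ∀ a ∈ S', ∀ b ∈ S, c b = T → x b * (T - c a) - u' a ≤ δ := by
          intro a ha b hb hcb
          exact Finset.le_inf' hS'ne _ (fun b' hb' => key a ha b' hb' b hb hcb)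
        refine ⟨fun a => if c a = T then 0 else u' a + δ, ?_, ?_⟩
        · intro a ha
          by_cases h : c a = T
          · simp [h]
          · have haS' := hmemS' a ha h
            have h1 := hδge a haS' b₀ hb₀S hb₀.symm
            have hx0b : 0 ≤ x b₀ * (T - c a) :=
              mul_nonneg (hx0 b₀) (sub_nonneg.mpr (hleT a ha))
            dsimp only
            rw [if_neg h]
            linarith
        · intro a ha b hb
          dsimp only
          by_cases hca : c a = T
          · by_cases hcb : c b = T
            · rw [if_pos hca, if_pos hcb, hca, hcb]; simp
            · rw [if_pos hca, if_neg hcb]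
              have hbS' := hmemS' b hb hcb
              have h1 := Finset.inf'_le (fun b => x b * (T - c b) - u' b) hbS'
              rw [hca]
              simp only [← hδdef] at h1
              nlinarith [h1]
          · by_cases hcb : c b = T
            · rw [if_neg hca, if_pos hcb]
              have haS' := hmemS' a ha hca
              have h1 := hδge a haS' b hb hcb
              rw [hcb]
              linarith
            · rw [if_neg hca, if_neg hcb]
              have haS' := hmemS' a ha hca
              have hbS' := hmemS' b hb hcb
              have h1 := hIC' a haS' b hbS'
              linarith

/-- In the cost (chore) setting, an allocation rule admits payments making the
mechanism truthful (IC and IR) iff it is monotone with respect to the signal orderings induced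
by the cost functions. -/
theorem stmt2 (n k : ℕ)
    (c : Fin n → (Fin n → Fin k) → ℝ) (hc : ∀ i s, 0 < c i s)
    (x : Fin n → (Fin n → Fin k) → ℝ)
    (hx01 : ∀ i s, 0 ≤ x i s ∧ x i s ≤ 1)
    (hxsum : ∀ s, ∑ i, x i s = 1) :
    (∃ p : Fin n → (Fin n → Fin k) → ℝ,
      (∀ i s, 0 ≤ p i s) ∧
      (∀ (s : Fin n → Fin k) (i : Fin n) (b : Fin k),
        p i (Function.update s i b) - x i (Function.update s i b) * c i s
          ≤ p i s - x i s * c i s) ∧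
      (∀ (s : Fin n → Fin k) (i : Fin n), 0 ≤ p i s - x i s * c i s)) ↔
    (∀ (i : Fin n) (s : Fin n → Fin k) (a b : Fin k),
      c i (Function.update s i b) < c i (Function.update s i a) →
      x i (Function.update s i a) ≤ x i (Function.update s i b)) := by
  classical
  constructor
  · rintro ⟨p, hp0, hIC, hIR⟩ i s a b hcb
    have h1 := hIC (Function.update s i a) i b
    have h2 := hIC (Function.update s i b) i a
    simp only [Function.update_idem] at h1 h2
    by_contra h
    push_neg at h
    nlinarith [h1, h2, h, hcb]
  · intro hmono
    rcases Nat.eq_zero_or_pos k with hk | hk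
    · subst hk
      refine ⟨fun _ _ => 0, fun i s => le_refl 0, ?_, ?_⟩
      · intro s i b; exact (s i).elim0
      · intro s i; exact (s i).elim0
    · set z : Fin k := ⟨0, hk⟩ with hz
      choose u hu0 huIC using fun (i : Fin n) (t : Fin n → Fin k) =>
        exists_potential (fun a => c i (Function.update t i a))
          (fun a => x i (Function.update t i a))
          (fun a => (hx01 i _).1)
          (fun a b h => hmono i t a b h) Finset.univ
      refine ⟨fun i s => x i s * c i s + u i (Function.update s i z) (s i), ?_, ?_, ?_⟩
      · intro i s
        have h1 : 0 ≤ x i s * c i s := mul_nonneg (hx01 i s).1 (hc i s).le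
        have h2 := hu0 i (Function.update s i z) (s i) (Finset.mem_univ _)
        dsimp only
        linarith
      · intro s i b
        have h := huIC i (Function.update s i z) (s i) (Finset.mem_univ _) b (Finset.mem_univ _)
        dsimp only
        simp only [Function.update_idem, Function.update_self] at h ⊢
        rw [Function.update_eq_self] at h
        nlinarith [h]
      · intro s i
        have h := hu0 i (Function.update s i z) (s i) (Finset.mem_univ _)
        dsimp only
        linarith
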